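/- Let P be a Markov kernel on a measurable space (X, 𝓑(X)) satisfying the drift condition P V(x) ≤ V(x) − ϕ(V(x)) + b·1_C(x) for all x ∈ X, where V : X → [1,∞) is measurable, C ∈ 𝓑(X), b < ∞, and ϕ : [1,∞) → (0,∞) is a non-decreasing concave differentiable function with H_ϕ(t) → ∞ as t → ∞. Then for every k ≥ 0 and all x ∈ X: P V_{k+1}(x) ≤ V_k(x) − ϕ(1) r_ϕ(k) + b r_ϕ(k+1)·1_C(x), where r_ϕ(k) = ϕ(H_ϕ^{-1}(k))/ϕ(1), V_k = H_k ∘ V, and H_k(v) = H_ϕ^{-1}(H_ϕ(v) + k) − H_ϕ^{-1}(k). -/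

import Mathlib

open MeasureTheory ProbabilityTheory Filter Set

noncomputable def iterKernel {X : Type*} [MeasurableSpace X]
    (P : ℕ → Kernel X X) : ℕ → Kernel X X
  | 0 => Kernel.id
  | n + 1 => (P (n + 1)).comp (iterKernel P n)

noncomputable def Hfun (φ : ℝ → ℝ) (t : ℝ) : ℝ := ∫ s in (1:ℝ)..t, (φ s)⁻¹

noncomputable def Hinv (φ : ℝ → ℝ) : ℝ → ℝ := Function.invFunOn (Hfun φ) (Set.Ici 1)

noncomputable def rate (φ : ℝ → ℝ) (εb : ℝ) (n : ℕ) : ℝ := φ (Hinv φ (εb * n)) / φ 1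

noncomputable def deltaSeq (φ : ℝ → ℝ) (εb : ℝ) (k : ℕ) : ℝ := εb * deriv φ (Hinv φ (εb * k))

noncomputable def bbar (φ : ℝ → ℝ) (εb bV : ℝ) : ℝ := 2 * bV + εb * φ 1

noncomputable def Mone (φ : ℝ → ℝ) (εb εν bV cV : ℝ) : ℝ :=
  rate φ εb 1 * (1 + 2 * rate φ εb 1 / (εb * φ 1) * ((bV + cV) / (1 - εν) - 1))

noncomputable def cstar (φ : ℝ → ℝ) (εb εν bV cV : ℝ) : ℝ :=
  ∑' j : ℕ, (1 - εν) ^ j * ∏ k ∈ Finset.Icc 1 j, (1 + deltaSeq φ εb k * Mone φ εb εν bV cV)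

noncomputable def cconst (φ : ℝ → ℝ) (εb εν bV cV : ℝ) : ℝ :=
  2 / (εb * φ 1) * (2 + bbar φ εb bV / εν +
    cstar φ εb εν bV cV * bbar φ εb bV * rate φ εb 1 * (1 + rate φ εb 1 / (εb * φ 1)))

noncomputable def Qmeas {X : Type*} [MeasurableSpace X]
    (P : ℕ → Kernel X X) (ν : ℕ → Measure X) (εν : ℝ) (k : ℕ) (x : X) : Measure X :=
  (ENNReal.ofReal (1 - εν))⁻¹ • (P k x - ENNReal.ofReal εν • ν k)

noncomputable def psiA (ϕ : ℝ → ℝ) (s : ℝ) : ℝ := (ϕ (max s 1))⁻¹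

noncomputable def HA (ϕ : ℝ → ℝ) (t : ℝ) : ℝ := ∫ s in (1:ℝ)..t, psiA ϕ s

section aux

variable {ϕ : ℝ → ℝ}

theorem psiA_pos (hϕpos : ∀ t, 1 ≤ t → 0 < ϕ t) (s : ℝ) : 0 < psiA ϕ s :=
  inv_pos.2 (hϕpos _ (le_max_right s 1))

theorem psiA_cont (hϕdiff : ∀ t, 1 ≤ t → DifferentiableAt ℝ ϕ t)
    (hϕpos : ∀ t, 1 ≤ t → 0 < ϕ t) : Continuous (psiA ϕ) := by
  have h1 : Continuous fun s : ℝ => ϕ (max s 1) := by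
    rw [continuous_iff_continuousAt]
    intro s
    exact ContinuousAt.comp ((hϕdiff _ (le_max_right s 1)).continuousAt)
      ((continuous_id.max continuous_const).continuousAt)
  exact h1.inv₀ fun s => (hϕpos _ (le_max_right s 1)).ne'

theorem psiA_eq (s : ℝ) (hs : 1 ≤ s) : psiA ϕ s = (ϕ s)⁻¹ := by
  rw [psiA, max_eq_left hs]

theorem HA_hasDeriv (hϕdiff : ∀ t, 1 ≤ t → DifferentiableAt ℝ ϕ t)
    (hϕpos : ∀ t, 1 ≤ t → 0 < ϕ t) (t : ℝ) : HasDerivAt (HA ϕ) (psiA ϕ t) t :=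
  intervalIntegral.integral_hasDerivAt_right
    ((psiA_cont hϕdiff hϕpos).intervalIntegrable _ _)
    ((psiA_cont hϕdiff hϕpos).stronglyMeasurableAtFilter _ _)
    (psiA_cont hϕdiff hϕpos).continuousAt

theorem HA_cont (hϕdiff : ∀ t, 1 ≤ t → DifferentiableAt ℝ ϕ t)
    (hϕpos : ∀ t, 1 ≤ t → 0 < ϕ t) : Continuous (HA ϕ) := by
  rw [continuous_iff_continuousAt]
  exact fun t => (HA_hasDeriv hϕdiff hϕpos t).continuousAt

theorem HA_strictMono (hϕdiff : ∀ t, 1 ≤ t → DifferentiableAt ℝ ϕ t)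
    (hϕpos : ∀ t, 1 ≤ t → 0 < ϕ t) : StrictMono (HA ϕ) :=
  strictMono_of_deriv_pos fun t => by
    rw [(HA_hasDeriv hϕdiff hϕpos t).deriv]; exact psiA_pos hϕpos t

theorem HA_one : HA ϕ 1 = 0 := intervalIntegral.integral_same

theorem HA_eq_Hfun (t : ℝ) (ht : 1 ≤ t) : Hfun ϕ t = HA ϕ t := by
  refine intervalIntegral.integral_congr fun s hs => ?_
  rw [uIcc_of_le ht] at hs
  rw [psiA_eq s hs.1]

theorem HA_sub (hϕdiff : ∀ t, 1 ≤ t → DifferentiableAt ℝ ϕ t)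
    (hϕpos : ∀ t, 1 ≤ t → 0 < ϕ t) (a b : ℝ) :
    HA ϕ b - HA ϕ a = ∫ s in a..b, psiA ϕ s := by
  rw [HA, HA, intervalIntegral.integral_interval_sub_left
    ((psiA_cont hϕdiff hϕpos).intervalIntegrable _ _)
    ((psiA_cont hϕdiff hϕpos).intervalIntegrable _ _)]



variable (hϕdiff : ∀ t, 1 ≤ t → DifferentiableAt ℝ ϕ t)
    (hϕpos : ∀ t, 1 ≤ t → 0 < ϕ t)
    (hϕmono : MonotoneOn ϕ (Set.Ici 1))
    (hH : Tendsto (Hfun ϕ) atTop atTop)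

include hϕdiff hϕpos

theorem HA_nonneg (t : ℝ) (ht : 1 ≤ t) : 0 ≤ HA ϕ t := by
  have := (HA_strictMono hϕdiff hϕpos).monotone ht
  rwa [HA_one] at this

include hH in
theorem HA_surj (s : ℝ) (hs : 0 ≤ s) : ∃ t, 1 ≤ t ∧ HA ϕ t = s := by
  have hH' : Tendsto (HA ϕ) atTop atTop := by
    refine hH.congr' ?_
    filter_upwards [eventually_ge_atTop (1:ℝ)] with t ht using HA_eq_Hfun t ht
  obtain ⟨t₀, ht₀⟩ := ((hH'.eventually_ge_atTop s).and (eventually_ge_atTop (1:ℝ))).exists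
  have hmem : s ∈ Icc (HA ϕ 1) (HA ϕ t₀) := ⟨by rw [HA_one]; exact hs, ht₀.1⟩
  obtain ⟨t, ht, hteq⟩ := intermediate_value_Icc ht₀.2 ((HA_cont hϕdiff hϕpos).continuousOn) hmem
  exact ⟨t, ht.1, hteq⟩

include hH in
theorem Hinv_spec (s : ℝ) (hs : 0 ≤ s) : 1 ≤ Hinv ϕ s ∧ HA ϕ (Hinv ϕ s) = s := by
  obtain ⟨t, ht1, hts⟩ := HA_surj hϕdiff hϕpos hH s hs
  have hex : ∃ a ∈ Ici (1:ℝ), Hfun ϕ a = s := ⟨t, ht1, by rw [HA_eq_Hfun t ht1, hts]⟩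
  obtain ⟨hmem, heq⟩ := Function.invFunOn_pos hex
  refine ⟨hmem, ?_⟩
  show HA ϕ (Function.invFunOn (Hfun ϕ) (Ici 1) s) = s
  rw [← HA_eq_Hfun _ hmem]; exact heq

include hH in
theorem Hinv_HA (t : ℝ) (ht : 1 ≤ t) : Hinv ϕ (HA ϕ t) = t := by
  have h0 : 0 ≤ HA ϕ t := HA_nonneg hϕdiff hϕpos t ht
  obtain ⟨h1, h2⟩ := Hinv_spec hϕdiff hϕpos hH (HA ϕ t) h0
  exact (HA_strictMono hϕdiff hϕpos).injective h2

include hH in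
theorem Hinv_mono {s t : ℝ} (hs : 0 ≤ s) (hst : s ≤ t) : Hinv ϕ s ≤ Hinv ϕ t := by
  by_contra h
  push_neg at h
  have := (HA_strictMono hϕdiff hϕpos) h
  rw [(Hinv_spec hϕdiff hϕpos hH s hs).2, (Hinv_spec hϕdiff hϕpos hH t (hs.trans hst)).2] at this
  linarith

include hϕmono hH in
theorem Hinv_lower {s t : ℝ} (hs : 0 ≤ s) (hst : s ≤ t) :
    ϕ (Hinv ϕ s) * (t - s) ≤ Hinv ϕ t - Hinv ϕ s := by
  obtain ⟨hp1, hpe⟩ := Hinv_spec hϕdiff hϕpos hH s hs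
  obtain ⟨hq1, hqe⟩ := Hinv_spec hϕdiff hϕpos hH t (hs.trans hst)
  set p := Hinv ϕ s
  set q := Hinv ϕ t
  have hpq : p ≤ q := Hinv_mono hϕdiff hϕpos hH hs hst
  have hts : t - s = ∫ r in p..q, psiA ϕ r := by
    rw [← hpe, ← hqe, HA_sub hϕdiff hϕpos]
  have hbound : t - s ≤ (ϕ p)⁻¹ * (q - p) := by
    rw [hts]
    calc ∫ r in p..q, psiA ϕ r ≤ ∫ _ in p..q, (ϕ p)⁻¹ := by
          apply intervalIntegral.integral_mono_on hpq
            ((psiA_cont hϕdiff hϕpos).intervalIntegrable _ _)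
            (intervalIntegrable_const)
          intro r hr
          rw [psiA_eq r (hp1.trans hr.1)]
          exact inv_anti₀ (hϕpos p hp1) (hϕmono (by exact hp1) (hp1.trans hr.1) hr.1)
      _ = (ϕ p)⁻¹ * (q - p) := by rw [intervalIntegral.integral_const, smul_eq_mul, mul_comm]
  have hppos : 0 < ϕ p := hϕpos p hp1
  calc ϕ p * (t - s) ≤ ϕ p * ((ϕ p)⁻¹ * (q - p)) := by
        apply mul_le_mul_of_nonneg_left hbound hppos.le
    _ = q - p := by field_simp

include hϕmono hH in
theorem Hinv_upper {s t : ℝ} (hs : 0 ≤ s) (hst : s ≤ t) :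
    Hinv ϕ t - Hinv ϕ s ≤ ϕ (Hinv ϕ t) * (t - s) := by
  obtain ⟨hp1, hpe⟩ := Hinv_spec hϕdiff hϕpos hH s hs
  obtain ⟨hq1, hqe⟩ := Hinv_spec hϕdiff hϕpos hH t (hs.trans hst)
  set p := Hinv ϕ s
  set q := Hinv ϕ t
  have hpq : p ≤ q := Hinv_mono hϕdiff hϕpos hH hs hst
  have hts : t - s = ∫ r in p..q, psiA ϕ r := by
    rw [← hpe, ← hqe, HA_sub hϕdiff hϕpos]
  have hbound : (ϕ q)⁻¹ * (q - p) ≤ t - s := by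
    rw [hts]
    calc (ϕ q)⁻¹ * (q - p) = ∫ _ in p..q, (ϕ q)⁻¹ := by
          rw [intervalIntegral.integral_const, smul_eq_mul, mul_comm]
      _ ≤ ∫ r in p..q, psiA ϕ r := by
          apply intervalIntegral.integral_mono_on hpq (intervalIntegrable_const)
            ((psiA_cont hϕdiff hϕpos).intervalIntegrable _ _)
          intro r hr
          rw [psiA_eq r (hp1.trans hr.1)]
          exact inv_anti₀ (hϕpos r (hp1.trans hr.1))
            (hϕmono (hp1.trans hr.1) (hp1.trans (hpq.trans le_rfl)) hr.2)
  have hqpos : 0 < ϕ q := hϕpos q hq1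
  calc q - p = ϕ q * ((ϕ q)⁻¹ * (q - p)) := by field_simp
    _ ≤ ϕ q * (t - s) := mul_le_mul_of_nonneg_left hbound hqpos.le



include hϕmono hH in
theorem Hinv_contAt {s : ℝ} (hs : 0 < s) : ContinuousAt (Hinv ϕ) s := by
  apply continuousAt_of_locally_lipschitz (r := min s 1) (K := ϕ (Hinv ϕ (s+1)))
    (lt_min hs one_pos)
  intro y hy
  simp only [Real.dist_eq] at hy ⊢
  have h1' : |y - s| < s := lt_of_lt_of_le hy (min_le_left _ _)
  have h2' : |y - s| < 1 := lt_of_lt_of_le hy (min_le_right _ _)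
  obtain ⟨hl, hr⟩ := abs_lt.1 h1'
  obtain ⟨hl2, hr2⟩ := abs_lt.1 h2'
  have hy0 : 0 < y := by linarith
  have hys : y ≤ s + 1 := by linarith
  have key : ∀ a b' : ℝ, 0 < a → a ≤ b' → b' ≤ s + 1 →
      Hinv ϕ b' - Hinv ϕ a ≤ ϕ (Hinv ϕ (s+1)) * (b' - a) := by
    intro a b' ha hab hbs
    calc Hinv ϕ b' - Hinv ϕ a ≤ ϕ (Hinv ϕ b') * (b' - a) :=
          Hinv_upper hϕdiff hϕpos hϕmono hH ha.le hab
      _ ≤ ϕ (Hinv ϕ (s+1)) * (b' - a) := by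
          apply mul_le_mul_of_nonneg_right _ (by linarith)
          exact hϕmono (Hinv_spec hϕdiff hϕpos hH _ (ha.trans_le hab).le).1
            (Hinv_spec hϕdiff hϕpos hH _ (by linarith)).1
            (Hinv_mono hϕdiff hϕpos hH (ha.trans_le hab).le hbs)
  rcases le_total y s with h | h
  · have h1 := key y s hy0 h (by linarith)
    have h2 : Hinv ϕ y ≤ Hinv ϕ s := Hinv_mono hϕdiff hϕpos hH hy0.le h
    rw [abs_of_nonpos (by linarith : Hinv ϕ y - Hinv ϕ s ≤ 0),
      abs_of_nonpos (by linarith : y - s ≤ 0)]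
    linarith
  · have h1 := key s y hs h hys
    have h2 : Hinv ϕ s ≤ Hinv ϕ y := Hinv_mono hϕdiff hϕpos hH hs.le h
    rw [abs_of_nonneg (by linarith : (0:ℝ) ≤ Hinv ϕ y - Hinv ϕ s),
      abs_of_nonneg (by linarith : (0:ℝ) ≤ y - s)]
    linarith

include hϕmono hH in
theorem Hinv_hasDeriv {s : ℝ} (hs : 0 < s) :
    HasDerivAt (Hinv ϕ) (ϕ (Hinv ϕ s)) s := by
  have h1 : 1 ≤ Hinv ϕ s := (Hinv_spec hϕdiff hϕpos hH s hs.le).1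
  have hd := HasDerivAt.of_local_left_inverse
    (Hinv_contAt hϕdiff hϕpos hϕmono hH hs)
    (HA_hasDeriv hϕdiff hϕpos (Hinv ϕ s))
    (psiA_pos hϕpos _).ne' ?_
  · have he : (psiA ϕ (Hinv ϕ s))⁻¹ = ϕ (Hinv ϕ s) := by
      rw [psiA_eq _ h1, inv_inv]
    rwa [he] at hd
  · filter_upwards [Ioi_mem_nhds hs] with y hy
    exact (Hinv_spec hϕdiff hϕpos hH y (le_of_lt hy)).2

noncomputable def GA (ϕ : ℝ → ℝ) (c : ℝ) (v : ℝ) : ℝ := Hinv ϕ (HA ϕ v + c)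

include hH in
theorem GA_ge_one {c v : ℝ} (hc : 0 ≤ c) (hv : 1 ≤ v) : 1 ≤ GA ϕ c v :=
  (Hinv_spec hϕdiff hϕpos hH _ (add_nonneg (HA_nonneg hϕdiff hϕpos v hv) hc)).1

include hH in
theorem GA_ge_self {c v : ℝ} (hc : 0 ≤ c) (hv : 1 ≤ v) : v ≤ GA ϕ c v := by
  have h0 : 0 ≤ HA ϕ v := HA_nonneg hϕdiff hϕpos v hv
  have := Hinv_mono hϕdiff hϕpos hH h0 (by linarith : HA ϕ v ≤ HA ϕ v + c)
  rwa [Hinv_HA hϕdiff hϕpos hH v hv] at this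

include hϕmono hH in
theorem GA_hasDeriv {c v : ℝ} (hc : 0 < c) (hv : 1 ≤ v) :
    HasDerivAt (GA ϕ c) (ϕ (GA ϕ c v) * (ϕ v)⁻¹) v := by
  have hpos : 0 < HA ϕ v + c := by
    linarith [HA_nonneg hϕdiff hϕpos v hv]
  have hin : HasDerivAt (fun w => HA ϕ w + c) (psiA ϕ v) v :=
    (HA_hasDeriv hϕdiff hϕpos v).add_const c
  have hout := Hinv_hasDeriv hϕdiff hϕpos hϕmono hH hpos
  have hcomp := HasDerivAt.comp v hout hin
  rw [psiA_eq v hv] at hcomp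
  exact hcomp

include hϕmono hH in
theorem GA_contAt {c v : ℝ} (hc : 0 < c) (hv : 1 ≤ v) : ContinuousAt (GA ϕ c) v := by
  have hpos : 0 < HA ϕ v + c := by
    linarith [HA_nonneg hϕdiff hϕpos v hv]
  have h1 : ContinuousAt (fun w => HA ϕ w + c) v :=
    ((HA_cont hϕdiff hϕpos).continuousAt).add continuousAt_const
  have h2 := ContinuousAt.comp (g := Hinv ϕ) (f := fun w => HA ϕ w + c)
    (Hinv_contAt hϕdiff hϕpos hϕmono hH hpos) h1
  exact h2

variable (hϕconc : ConcaveOn ℝ (Set.Ici 1) ϕ)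

include hϕmono hϕconc hH in
theorem slope_anti {c : ℝ} (hc : 0 < c) :
    AntitoneOn (fun v => ϕ (GA ϕ c v) / ϕ v) (Ici 1) := by
  have hderiv : ∀ v ∈ Ioi (1:ℝ), HasDerivAt (fun v => ϕ (GA ϕ c v) / ϕ v)
      ((deriv ϕ (GA ϕ c v) * (ϕ (GA ϕ c v) * (ϕ v)⁻¹) * ϕ v -
        ϕ (GA ϕ c v) * deriv ϕ v) / (ϕ v)^2) v := by
    intro v hv
    have hv1 : (1:ℝ) ≤ v := le_of_lt hv
    have hG1 : 1 ≤ GA ϕ c v := GA_ge_one hϕdiff hϕpos hH hc.le hv1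
    have hnum : HasDerivAt (fun v => ϕ (GA ϕ c v))
        (deriv ϕ (GA ϕ c v) * (ϕ (GA ϕ c v) * (ϕ v)⁻¹)) v :=
      HasDerivAt.comp v ((hϕdiff _ hG1).hasDerivAt)
        (GA_hasDeriv hϕdiff hϕpos hϕmono hH hc hv1)
    exact hnum.div ((hϕdiff v hv1).hasDerivAt) (hϕpos v hv1).ne'
  apply antitoneOn_of_deriv_nonpos (convex_Ici 1)
  · apply ContinuousOn.div
    · intro v hv
      have h2 := ContinuousAt.comp (g := ϕ) (f := GA ϕ c)
        ((hϕdiff _ (GA_ge_one hϕdiff hϕpos hH hc.le hv)).continuousAt)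
        (GA_contAt hϕdiff hϕpos hϕmono hH hc hv)
      exact h2.continuousWithinAt
    · intro v hv
      exact ((hϕdiff v hv).continuousAt).continuousWithinAt
    · intro v hv
      exact (hϕpos v hv).ne'
  · intro v hv
    rw [interior_Ici] at hv
    exact ((hderiv v hv).differentiableAt).differentiableWithinAt
  · intro v hv
    rw [interior_Ici] at hv
    have hv1 : (1:ℝ) ≤ v := le_of_lt hv
    have hG1 : 1 ≤ GA ϕ c v := GA_ge_one hϕdiff hϕpos hH hc.le hv1
    have hGv : v ≤ GA ϕ c v := GA_ge_self hϕdiff hϕpos hH hc.le hv1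
    rw [(hderiv v hv).deriv]
    have hϕv : 0 < ϕ v := hϕpos v hv1
    have hϕG : 0 < ϕ (GA ϕ c v) := hϕpos _ hG1
    have hd : deriv ϕ (GA ϕ c v) ≤ deriv ϕ v :=
      hϕconc.antitoneOn_deriv (fun t ht => hϕdiff t ht) hv1 hG1 hGv
    apply div_nonpos_of_nonpos_of_nonneg _ (sq_nonneg _)
    have heq : deriv ϕ (GA ϕ c v) * (ϕ (GA ϕ c v) * (ϕ v)⁻¹) * ϕ v
        = ϕ (GA ϕ c v) * deriv ϕ (GA ϕ c v) := by
      field_simp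
    rw [heq]
    nlinarith [mul_le_mul_of_nonneg_left hd hϕG.le]

include hϕmono hϕconc hH in
theorem tangent {c m v : ℝ} (hc : 0 < c) (hm : 1 ≤ m) (hv : 1 ≤ v) :
    GA ϕ c v ≤ GA ϕ c m + ϕ (GA ϕ c m) / ϕ m * (v - m) := by
  set sm := ϕ (GA ϕ c m) / ϕ m with hsm
  have hFd : ∀ w, 1 ≤ w → HasDerivAt (fun w => GA ϕ c w - sm * w)
      (ϕ (GA ϕ c w) * (ϕ w)⁻¹ - sm) w := by
    intro w hw
    have h1 := GA_hasDeriv hϕdiff hϕpos hϕmono hH hc hw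
    have h2 : HasDerivAt (fun w : ℝ => sm * w) sm w := by
      simpa using (hasDerivAt_id w).const_mul sm
    exact h1.sub h2
  have hanti := slope_anti hϕdiff hϕpos hϕmono hH hϕconc hc
  have hcont : ContinuousOn (fun w => GA ϕ c w - sm * w) (Ici 1) := by
    intro w hw
    exact ((GA_contAt hϕdiff hϕpos hϕmono hH hc hw).sub
      (continuousAt_const.mul continuousAt_id)).continuousWithinAt
  rcases le_total v m with h | h
  · -- v ≤ m : F monotone on Icc 1 m
    have hmono2 : MonotoneOn (fun w => GA ϕ c w - sm * w) (Icc 1 m) := by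
      apply monotoneOn_of_deriv_nonneg (convex_Icc 1 m) (hcont.mono Icc_subset_Ici_self)
      · intro w hw
        rw [interior_Icc] at hw
        exact ((hFd w hw.1.le).differentiableAt).differentiableWithinAt
      · intro w hw
        rw [interior_Icc] at hw
        rw [(hFd w hw.1.le).deriv]
        have := hanti (mem_Ici.2 hw.1.le) (mem_Ici.2 hm) hw.2.le
        simp only [div_eq_mul_inv] at this hsm
        rw [hsm]
        linarith
    have := hmono2 (mem_Icc.2 ⟨hv, h⟩) (mem_Icc.2 ⟨hm, le_rfl⟩) h
    simp only at this
    nlinarith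
  · -- m ≤ v : F antitone on Ici m
    have hanti2 : AntitoneOn (fun w => GA ϕ c w - sm * w) (Ici m) := by
      apply antitoneOn_of_deriv_nonpos (convex_Ici m) (hcont.mono (Ici_subset_Ici.2 hm))
      · intro w hw
        rw [interior_Ici] at hw
        exact ((hFd w (hm.trans hw.le)).differentiableAt).differentiableWithinAt
      · intro w hw
        rw [interior_Ici] at hw
        rw [(hFd w (hm.trans hw.le)).deriv]
        have := hanti (mem_Ici.2 hm) (mem_Ici.2 (hm.trans hw.le)) hw.le
        simp only [div_eq_mul_inv] at this hsm
        rw [hsm]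
        linarith
    have := hanti2 (mem_Ici.2 le_rfl) (mem_Ici.2 h) h
    simp only at this
    nlinarith

include hϕmono hϕconc hH in
theorem maxslope {c p q : ℝ} (hc : 1 ≤ c) (hp : 1 ≤ p) (hpq : p ≤ q) :
    GA ϕ c q ≤ GA ϕ c p + ϕ (Hinv ϕ c) / ϕ 1 * (q - p) := by
  have hc0 : (0:ℝ) < c := lt_of_lt_of_le one_pos hc
  have h1 := tangent hϕdiff hϕpos hϕmono hH hϕconc hc0 hp (hp.trans hpq)
  have hG1 : GA ϕ 1 1 = Hinv ϕ 1 := by rw [GA, HA_one, zero_add]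
  have hGA1 : GA ϕ c 1 = Hinv ϕ c := by rw [GA, HA_one, zero_add]
  have h2 : ϕ (GA ϕ c p) / ϕ p ≤ ϕ (Hinv ϕ c) / ϕ 1 := by
    have := slope_anti hϕdiff hϕpos hϕmono hH hϕconc hc0 (mem_Ici.2 le_rfl) (mem_Ici.2 hp) hp
    simpa [hGA1] using this
  have h3 : ϕ (GA ϕ c p) / ϕ p * (q - p) ≤ ϕ (Hinv ϕ c) / ϕ 1 * (q - p) :=
    mul_le_mul_of_nonneg_right h2 (by linarith)
  linarith

include hϕmono in
theorem HA_drift {w : ℝ} (hw : 1 ≤ w) (hu : 1 ≤ w - ϕ w) :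
    HA ϕ (w - ϕ w) + 1 ≤ HA ϕ w := by
  have hϕw : 0 < ϕ w := hϕpos w hw
  have hsub : HA ϕ w - HA ϕ (w - ϕ w) = ∫ s in (w - ϕ w)..w, psiA ϕ s :=
    HA_sub hϕdiff hϕpos _ _
  have hlow : ∫ s in (w - ϕ w)..w, (ϕ w)⁻¹ ≤ ∫ s in (w - ϕ w)..w, psiA ϕ s := by
    apply intervalIntegral.integral_mono_on (by linarith) intervalIntegrable_const
      ((psiA_cont hϕdiff hϕpos).intervalIntegrable _ _)
    intro r hr
    rw [psiA_eq r (hu.trans hr.1)]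
    exact inv_anti₀ (hϕpos r (hu.trans hr.1)) (hϕmono (hu.trans hr.1) (mem_Ici.2 hw) hr.2)
  have hconst : ∫ s in (w - ϕ w)..w, (ϕ w)⁻¹ = ϕ w * (ϕ w)⁻¹ := by
    rw [intervalIntegral.integral_const, smul_eq_mul]
    ring_nf
  rw [mul_inv_cancel₀ hϕw.ne'] at hconst
  linarith [hconst ▸ hlow, hsub]

include hϕmono in
theorem HA_lowerbound {w : ℝ} (hw : 1 ≤ w) : (w - 1) * (ϕ w)⁻¹ ≤ HA ϕ w := by
  have h0 : HA ϕ w = HA ϕ w - HA ϕ 1 := by rw [HA_one]; ring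
  rw [h0, HA_sub hϕdiff hϕpos]
  have hlow : ∫ s in (1:ℝ)..w, (ϕ w)⁻¹ ≤ ∫ s in (1:ℝ)..w, psiA ϕ s := by
    apply intervalIntegral.integral_mono_on hw intervalIntegrable_const
      ((psiA_cont hϕdiff hϕpos).intervalIntegrable _ _)
    intro r hr
    rw [psiA_eq r hr.1]
    exact inv_anti₀ (hϕpos r hr.1) (hϕmono hr.1 (mem_Ici.2 hw) hr.2)
  have hconst : ∫ s in (1:ℝ)..w, (ϕ w)⁻¹ = (w - 1) * (ϕ w)⁻¹ := by
    rw [intervalIntegral.integral_const, smul_eq_mul]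
  linarith [hconst ▸ hlow]

end aux


set_option maxHeartbeats 2000000 in
/-- Proposition A.2 (Douc–Fort–Moulines–Soulier, Prop. 2.1): from a drift
condition for `V`, a sequence of drift inequalities for `V_k = H_k ∘ V`,
where `H_k(v) = H_ϕ⁻¹(H_ϕ(v) + k) − H_ϕ⁻¹(k)` and `r_ϕ(k) = ϕ(H_ϕ⁻¹(k))/ϕ(1)`. -/
theorem statement18 {X : Type*} [MeasurableSpace X]
    (P : Kernel X X) [IsMarkovKernel P]
    (C : Set X) (hC : MeasurableSet C)
    (V : X → ℝ) (hVmeas : Measurable V) (hV1 : ∀ x, 1 ≤ V x)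
    (b : ℝ)
    (ϕ : ℝ → ℝ)
    (hϕconc : ConcaveOn ℝ (Set.Ici 1) ϕ)
    (hϕmono : MonotoneOn ϕ (Set.Ici 1))
    (hϕdiff : ∀ t, 1 ≤ t → DifferentiableAt ℝ ϕ t)
    (hϕpos : ∀ t, 1 ≤ t → 0 < ϕ t)
    (hH : Tendsto (Hfun ϕ) atTop atTop)
    (hVint : ∀ x, Integrable V (P x))
    (hVkint : ∀ (k : ℕ) (x : X),
      Integrable (fun y => Hinv ϕ (Hfun ϕ (V y) + k) - Hinv ϕ k) (P x))
    (hdrift : ∀ x, ∫ y, V y ∂(P x) ≤ V x - ϕ (V x) + b * C.indicator 1 x) :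
    ∀ (k : ℕ) (x : X),
      ∫ y, (Hinv ϕ (Hfun ϕ (V y) + (k + 1)) - Hinv ϕ (k + 1)) ∂(P x) ≤
        (Hinv ϕ (Hfun ϕ (V x) + k) - Hinv ϕ k) -
          ϕ 1 * (ϕ (Hinv ϕ k) / ϕ 1) +
          b * (ϕ (Hinv ϕ (k + 1)) / ϕ 1) * C.indicator 1 x := by
  intro k x
  haveI : Nonempty X := ⟨x⟩
  have hϕ1 : 0 < ϕ 1 := hϕpos 1 le_rfl
  rcases le_or_gt b 0 with hb | hb
  · -- b ≤ 0 contradicts the drift condition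
    exfalso
    have hbdd : BddBelow (Set.range V) :=
      ⟨1, fun r hr => by obtain ⟨y, rfl⟩ := hr; exact hV1 y⟩
    have hlt : (⨅ y, V y) < (⨅ y, V y) + ϕ 1 := by linarith
    obtain ⟨x', hx'⟩ := exists_lt_of_ciInf_lt hlt
    have hile : ∀ y, (⨅ y, V y) ≤ V y := fun y => ciInf_le hbdd y
    have h1 : (⨅ y, V y) ≤ ∫ y, V y ∂(P x') := by
      have heq : ∫ _, (⨅ y, V y) ∂(P x') = (⨅ y, V y) := by
        simp [integral_const, measure_univ]
      calc (⨅ y, V y) = ∫ _, (⨅ y, V y) ∂(P x') := heq.symm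
        _ ≤ ∫ y, V y ∂(P x') := integral_mono (integrable_const _) (hVint x') hile
    have h2 := hdrift x'
    have hind0 : (0:ℝ) ≤ C.indicator 1 x' :=
      Set.indicator_nonneg (fun _ _ => zero_le_one) x'
    have hind : b * C.indicator 1 x' ≤ 0 := mul_nonpos_iff.2 (Or.inr ⟨hb, hind0⟩)
    have hm1 : ϕ 1 ≤ ϕ (V x') := hϕmono (mem_Ici.2 le_rfl) (hV1 x') (hV1 x')
    linarith
  · -- main case : b > 0
    set c : ℝ := (k:ℝ) + 1 with hc
    clear_value c
    have hk0 : (0:ℝ) ≤ (k:ℝ) := Nat.cast_nonneg k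
    have hc1 : (1:ℝ) ≤ c := by rw [hc]; linarith
    have hc0 : (0:ℝ) < c := by linarith
    have hVx1 : (1:ℝ) ≤ V x := hV1 x
    -- basic quantities
    have hKc1 : 1 ≤ Hinv ϕ c := (Hinv_spec hϕdiff hϕpos hH c (by linarith)).1
    have hKk1 : 1 ≤ Hinv ϕ (k:ℝ) := (Hinv_spec hϕdiff hϕpos hH _ hk0).1
    have hL0 : 0 < ϕ (Hinv ϕ c) := hϕpos _ hKc1
    have hϕKk : 0 < ϕ (Hinv ϕ (k:ℝ)) := hϕpos _ hKk1
    have hsimp : ϕ 1 * (ϕ (Hinv ϕ (k:ℝ)) / ϕ 1) = ϕ (Hinv ϕ (k:ℝ)) := by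
      field_simp
    rw [hsimp]
    -- F4
    have hF4 : ϕ (Hinv ϕ (k:ℝ)) ≤ Hinv ϕ c - Hinv ϕ (k:ℝ) := by
      have h := Hinv_lower hϕdiff hϕpos hϕmono hH hk0 (by linarith : (k:ℝ) ≤ c)
      have hck : c - (k:ℝ) = 1 := by rw [hc]; ring
      rw [hck, mul_one] at h
      exact h
    -- pointwise rewriting
    have hfeq : ∀ v : ℝ, 1 ≤ v → Hinv ϕ (Hfun ϕ v + c) = GA ϕ c v := by
      intro v hv
      rw [GA, HA_eq_Hfun v hv]
    -- drift data
    set R := V x - ϕ (V x) + b * C.indicator 1 x with hR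
    clear_value R
    have hdx : ∫ y, V y ∂(P x) ≤ R := by rw [hR]; exact hdrift x
    set m := max 1 R with hm
    clear_value m
    have hm1 : (1:ℝ) ≤ m := by rw [hm]; exact le_max_left _ _
    have h1int : (1:ℝ) ≤ ∫ y, V y ∂(P x) := by
      have h := integral_mono (μ := P x) (integrable_const 1) (hVint x) hV1
      simpa [integral_const, measure_univ] using h
    have hIm : ∫ y, V y ∂(P x) ≤ m := hdx.trans (by rw [hm]; exact le_max_right _ _)
    have hR1 : 1 ≤ R := h1int.trans hdx
    have hmR : m = R := by rw [hm]; exact max_eq_right hR1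
    set sm := ϕ (GA ϕ c m) / ϕ m with hsm
    clear_value sm
    have hsm0 : 0 ≤ sm := by
      rw [hsm]
      exact div_nonneg (hϕpos _ (GA_ge_one hϕdiff hϕpos hH hc0.le hm1)).le (hϕpos m hm1).le
    -- integrability
    have hIk := hVkint (k+1) x
    push_cast at hIk
    rw [← hc] at hIk
    have hInt2 : Integrable (fun y => (GA ϕ c m + sm * (V y - m)) - Hinv ϕ c) (P x) :=
      ((integrable_const _).add (((hVint x).sub (integrable_const m)).const_mul sm)).sub
        (integrable_const _)
    -- pointwise tangent bound
    have hpt : ∀ y : X, Hinv ϕ (Hfun ϕ (V y) + c) - Hinv ϕ c ≤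
        (GA ϕ c m + sm * (V y - m)) - Hinv ϕ c := by
      intro y
      rw [hfeq (V y) (hV1 y)]
      have := tangent hϕdiff hϕpos hϕmono hH hϕconc hc0 hm1 (hV1 y)
      rw [hsm]
      linarith
    have hmain : ∫ y, (Hinv ϕ (Hfun ϕ (V y) + c) - Hinv ϕ c) ∂(P x) ≤
        GA ϕ c m - Hinv ϕ c := by
      have hsubint : Integrable (fun y => V y - m) (P x) :=
        (hVint x).sub (integrable_const m)
      have hmulint : Integrable (fun y => sm * (V y - m)) (P x) := hsubint.const_mul sm
      have hInt2' : Integrable (fun y => (GA ϕ c m - Hinv ϕ c) + sm * (V y - m)) (P x) :=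
        (integrable_const _).add hmulint
      have hpt' : ∀ y : X, Hinv ϕ (Hfun ϕ (V y) + c) - Hinv ϕ c ≤
          (GA ϕ c m - Hinv ϕ c) + sm * (V y - m) := by
        intro y
        have h := hpt y
        linarith
      have hmoment : ∫ y, ((GA ϕ c m - Hinv ϕ c) + sm * (V y - m)) ∂(P x) =
          (GA ϕ c m - Hinv ϕ c) + sm * ((∫ y, V y ∂(P x)) - m) := by
        rw [integral_add (integrable_const (GA ϕ c m - Hinv ϕ c)) hmulint,
          integral_const_mul, integral_sub (hVint x) (integrable_const m),
          integral_const, integral_const]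
        simp [measure_univ]
      calc ∫ y, (Hinv ϕ (Hfun ϕ (V y) + c) - Hinv ϕ c) ∂(P x)
          ≤ ∫ y, ((GA ϕ c m - Hinv ϕ c) + sm * (V y - m)) ∂(P x) :=
            integral_mono hIk hInt2' hpt'
        _ = (GA ϕ c m - Hinv ϕ c) + sm * ((∫ y, V y ∂(P x)) - m) := hmoment
        _ ≤ GA ϕ c m - Hinv ϕ c := by nlinarith
    refine hmain.trans ?_
    -- now prove : GA ϕ c m - Hinv ϕ c ≤ RHS
    rw [HA_eq_Hfun (V x) hVx1]
    by_cases hxC : x ∈ C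
    · have hind : C.indicator (1 : X → ℝ) x = 1 := Set.indicator_of_mem hxC 1
      rw [hind, mul_one]
      have hRu : R = (V x - ϕ (V x)) + b := by rw [hR, hind, mul_one]
      rcases le_or_gt 1 (V x - ϕ (V x)) with hu | hu
      · -- u ≥ 1
        have hdr := HA_drift hϕdiff hϕpos hϕmono hVx1 hu
        have hGu : GA ϕ c (V x - ϕ (V x)) ≤ Hinv ϕ (HA ϕ (V x) + (k:ℝ)) := by
          rw [GA]
          apply Hinv_mono hϕdiff hϕpos hH
            (add_nonneg (HA_nonneg hϕdiff hϕpos _ hu) hc0.le)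
          rw [hc]; linarith
        have h6 : GA ϕ c R ≤ GA ϕ c (V x - ϕ (V x)) + ϕ (Hinv ϕ c) / ϕ 1 * (R - (V x - ϕ (V x))) :=
          maxslope hϕdiff hϕpos hϕmono hH hϕconc hc1 hu (by rw [hRu]; linarith)
        have hRb : R - (V x - ϕ (V x)) = b := by rw [hRu]; ring
        rw [hRb] at h6
        rw [hmR]
        linarith
      · -- u < 1
        have hh := HA_lowerbound hϕdiff hϕpos hϕmono hVx1
        have hϕVx : 0 < ϕ (V x) := hϕpos _ hVx1
        have hVxh : V x - 1 ≤ HA ϕ (V x) * ϕ (V x) := by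
          have h2 := mul_le_mul_of_nonneg_right hh hϕVx.le
          calc V x - 1 = (V x - 1) * (ϕ (V x))⁻¹ * ϕ (V x) := by field_simp
            _ ≤ HA ϕ (V x) * ϕ (V x) := h2
        have h6 : GA ϕ c R ≤ GA ϕ c 1 + ϕ (Hinv ϕ c) / ϕ 1 * (R - 1) :=
          maxslope hϕdiff hϕpos hϕmono hH hϕconc hc1 le_rfl hR1
        have hGA1 : GA ϕ c 1 = Hinv ϕ c := by rw [GA, HA_one, zero_add]
        rw [hGA1] at h6
        have hLpos : 0 < ϕ (Hinv ϕ c) / ϕ 1 := div_pos hL0 hϕ1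
        have hkey : ϕ (Hinv ϕ c) / ϕ 1 * ((V x - ϕ (V x)) - 1) ≤
            Hinv ϕ (HA ϕ (V x) + (k:ℝ)) - Hinv ϕ (k:ℝ) - ϕ (Hinv ϕ (k:ℝ)) := by
          have hh0 : 0 ≤ HA ϕ (V x) := HA_nonneg hϕdiff hϕpos _ hVx1
          rcases le_or_gt 1 (HA ϕ (V x)) with hh1 | hh1
          · have hlow := Hinv_lower hϕdiff hϕpos hϕmono hH hk0
              (by linarith : (k:ℝ) ≤ HA ϕ (V x) + (k:ℝ))
            have heq2 : HA ϕ (V x) + (k:ℝ) - (k:ℝ) = HA ϕ (V x) := by ring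
            rw [heq2] at hlow
            have hneg : ϕ (Hinv ϕ c) / ϕ 1 * ((V x - ϕ (V x)) - 1) ≤ 0 :=
              mul_nonpos_iff.2 (Or.inl ⟨hLpos.le, by linarith⟩)
            nlinarith
          · have hub := Hinv_upper (s := HA ϕ (V x) + (k:ℝ)) (t := c) hϕdiff hϕpos hϕmono hH
              (by linarith) (by rw [hc]; linarith)
            have heq2 : c - (HA ϕ (V x) + (k:ℝ)) = 1 - HA ϕ (V x) := by rw [hc]; ring
            rw [heq2] at hub
            have hu1 : (V x - ϕ (V x)) - 1 ≤ (HA ϕ (V x) - 1) * ϕ (V x) := by nlinarith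
            have hstep1 : ϕ (Hinv ϕ c) / ϕ 1 * ((V x - ϕ (V x)) - 1) ≤
                ϕ (Hinv ϕ c) / ϕ 1 * ((HA ϕ (V x) - 1) * ϕ (V x)) :=
              mul_le_mul_of_nonneg_left hu1 hLpos.le
            have hϕ1Vx : ϕ 1 ≤ ϕ (V x) := hϕmono (mem_Ici.2 le_rfl) hVx1 hVx1
            have hLϕ1 : ϕ (Hinv ϕ c) / ϕ 1 * ϕ 1 = ϕ (Hinv ϕ c) := by field_simp
            -- K k + ϕ(K k) - K(h+k) ≤ K c - K(h+k) ≤ ϕ(Kc)(1-h) = L ϕ1 (1-h) ≤ L ϕVx (1-h)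
            have hstep2 : ϕ (Hinv ϕ c) * (1 - HA ϕ (V x)) ≤
                ϕ (Hinv ϕ c) / ϕ 1 * ϕ (V x) * (1 - HA ϕ (V x)) := by
              have h1h : (0:ℝ) ≤ 1 - HA ϕ (V x) := by linarith
              have : ϕ (Hinv ϕ c) ≤ ϕ (Hinv ϕ c) / ϕ 1 * ϕ (V x) := by
                rw [div_mul_eq_mul_div, le_div_iff₀ hϕ1]
                nlinarith
              nlinarith
            nlinarith
        rw [hmR, hRu]
        rw [hRu] at h6
        have h7 : ϕ (Hinv ϕ c) / ϕ 1 * (V x - ϕ (V x) + b - 1) =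
            ϕ (Hinv ϕ c) / ϕ 1 * ((V x - ϕ (V x)) - 1) + b * (ϕ (Hinv ϕ c) / ϕ 1) := by ring
        linarith
    · have hind : C.indicator (1 : X → ℝ) x = 0 := Set.indicator_of_notMem hxC 1
      rw [hind, mul_zero]
      have hRu : R = V x - ϕ (V x) := by rw [hR, hind, mul_zero, add_zero]
      have hu : 1 ≤ V x - ϕ (V x) := hRu ▸ hR1
      have hdr := HA_drift hϕdiff hϕpos hϕmono hVx1 hu
      have hGu : GA ϕ c R ≤ Hinv ϕ (HA ϕ (V x) + (k:ℝ)) := by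
        rw [hRu, GA]
        apply Hinv_mono hϕdiff hϕpos hH
          (add_nonneg (HA_nonneg hϕdiff hϕpos _ hu) hc0.le)
        rw [hc]; linarith
      rw [hmR]
      linarith
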